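/- Let X be a Hausdorff space, u ∈ ℱ(X), and f : X → X continuous. Then send(f̂(u)) = (f × id_{[0,1]})(send(u)), where send(u) = {(x, α) ∈ u_0 × [0,1] : u(x) ≥ α or α = 0 with x ∈ u_0}, i.e., the sendograph of the Zadeh extension is the image of the sendograph under f × id. -/

import Mathlib

open Set Filter Topology
open scoped Uniformity

/-- The α-cut of a fuzzy set: `{x | α ≤ u x}` for `α ≠ 0`, and the support
(closure of `{x | 0 < u x}`) for `α = 0`. -/
noncomputable def fuzzyCut {X : Type*} [TopologicalSpace X] (u : X → ℝ) (α : ℝ) : Set X :=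
  if α = 0 then closure {x | 0 < u x} else {x | α ≤ u x}

/-- `u` belongs to `ℱ(X)`: a normal upper semicontinuous `[0,1]`-valued fuzzy set
with compact support. -/
structure IsFuzzySet {X : Type*} [TopologicalSpace X] (u : X → ℝ) : Prop where
  mem_Icc : ∀ x, u x ∈ Set.Icc (0:ℝ) 1
  usc : UpperSemicontinuous u
  normal : ∃ x, u x = 1
  compact_supp : IsCompact (closure {x | 0 < u x})

/-- The Zadeh extension of `f`: `x ↦ sup {u z : f z = x}` (and `0` when the
preimage is empty, since `sSup ∅ = 0` in `ℝ`). -/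
noncomputable def zadeh {X : Type*} (f : X → X) (u : X → ℝ) : X → ℝ :=
  fun x => sSup (u '' (f ⁻¹' {x}))

/-- `W(A) = ⋃ a ∈ A, W(a)` where `W(a) = {y | (a, y) ∈ W}`. -/
def ballImage {Y : Type*} (W : Set (Y × Y)) (A : Set Y) : Set Y :=
  {y | ∃ a ∈ A, (a, y) ∈ W}

/-- The Hausdorff entourage relation `𝒦[W]`: `(A,B) ∈ 𝒦[W]` iff `A ⊆ W(B)` and `B ⊆ W(A)`. -/
def KRel {Y : Type*} (W : Set (Y × Y)) (A B : Set Y) : Prop :=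
  A ⊆ ballImage W B ∧ B ⊆ ballImage W A

/-- The level-wise entourage relation `ℱ[W]`: `(u_α, v_α) ∈ 𝒦[W]` for all `α ∈ [0,1]`. -/
def FRel {X : Type*} [TopologicalSpace X] (W : Set (X × X)) (u v : X → ℝ) : Prop :=
  ∀ α ∈ Set.Icc (0:ℝ) 1, KRel W (fuzzyCut u α) (fuzzyCut v α)

/-- The Skorokhod entourage relation `G[W, ε]`: there is an increasing homeomorphism `t`
of `[0,1]` with `‖t‖ < ε` and `(u_α, v_{t α}) ∈ 𝒦[W]` for all `α ∈ [0,1]`. -/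
def SkoRel {X : Type*} [TopologicalSpace X] (W : Set (X × X)) (ε : ℝ) (u v : X → ℝ) : Prop :=
  ∃ t : ℝ → ℝ, StrictMonoOn t (Set.Icc 0 1) ∧ t 0 = 0 ∧ t 1 = 1 ∧
    Set.MapsTo t (Set.Icc 0 1) (Set.Icc 0 1) ∧ Set.SurjOn t (Set.Icc 0 1) (Set.Icc 0 1) ∧
    (∀ α ∈ Set.Icc (0:ℝ) 1, |t α - α| < ε) ∧
    (∀ α ∈ Set.Icc (0:ℝ) 1, KRel W (fuzzyCut u α) (fuzzyCut v (t α)))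

/-- The sendograph of `u`: `end(u) ∩ (u₀ × [0,1])`. -/
noncomputable def send {X : Type*} [TopologicalSpace X] (u : X → ℝ) : Set (X × ℝ) :=
  {p | p.1 ∈ fuzzyCut u 0 ∧ p.2 ∈ Set.Icc (0:ℝ) 1 ∧ p.2 ≤ u p.1}

/-- The product entourage `U × V_ε` on `X × [0,1]`. -/
def prodEnt {X : Type*} (U : Set (X × X)) (ε : ℝ) : Set ((X × ℝ) × (X × ℝ)) :=
  {p | (p.1.1, p.2.1) ∈ U ∧ |p.1.2 - p.2.2| < ε}

/-- The sendograph entourage relation `S[U, ε]`. -/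
noncomputable def SendRel {X : Type*} [TopologicalSpace X] (U : Set (X × X)) (ε : ℝ)
    (u v : X → ℝ) : Prop :=
  KRel (prodEnt U ε) (send u) (send v)

/-- `u_{α⁺} = closure (⋃ β ∈ (α, 1], u_β)`, the right limit of the level map. -/
noncomputable def cutPlus {X : Type*} [TopologicalSpace X] (u : X → ℝ) (α : ℝ) : Set X :=
  closure (⋃ β ∈ Set.Ioc α 1, fuzzyCut u β)

/-- `B` belongs to the Vietoris basic open set `⟨V 0, …, V (k-1)⟩`. -/
def inVietoris {Y : Type*} (B : Set Y) (k : ℕ) (V : Fin k → Set Y) : Prop :=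
  B ⊆ (⋃ i, V i) ∧ ∀ i, (B ∩ V i).Nonempty

/-- Auxiliary: a usc function on a compact set (in a T2 space) which gets within
`1/(n+1)` of `α` on the set attains a value `≥ α` on the set. -/
lemma usc_key {X : Type*} [TopologicalSpace X] [T2Space X] {u : X → ℝ}
    (husc : UpperSemicontinuous u) {S : Set X} (hS : IsCompact S) {α : ℝ}
    (h : ∀ n : ℕ, ∃ z ∈ S, α - 1/(n+1) ≤ u z) : ∃ z ∈ S, α ≤ u z := by
  set T : ℕ → Set X := fun n => S ∩ u ⁻¹' Set.Ici (α - 1/(n+1)) with hT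
  have hmono : ∀ m n : ℕ, m ≤ n → T n ⊆ T m := by
    intro m n hmn x hx
    refine ⟨hx.1, ?_⟩
    have hx2 : α - 1/(n+1) ≤ u x := hx.2
    have hle : (1:ℝ)/(n+1) ≤ 1/(m+1) := by
      apply one_div_le_one_div_of_le (by positivity)
      have : (m:ℝ) ≤ n := Nat.cast_le.mpr hmn
      linarith
    simp only [Set.mem_preimage, Set.mem_Ici]
    linarith
  have hne : ∀ n, (T n).Nonempty := fun n => by
    obtain ⟨z, hzS, hz⟩ := h n; exact ⟨z, hzS, hz⟩
  have hclosed : ∀ n, IsClosed (T n) :=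
    fun n => hS.isClosed.inter (husc.isClosed_preimage _)
  have hcomp : ∀ n, IsCompact (T n) :=
    fun n => hS.inter_right (husc.isClosed_preimage _)
  have hdir : Directed (· ⊇ ·) T := fun m n =>
    ⟨max m n, hmono m _ (le_max_left m n), hmono n _ (le_max_right m n)⟩
  obtain ⟨z, hz⟩ :=
    IsCompact.nonempty_iInter_of_directed_nonempty_isCompact_isClosed T hdir hne hcomp hclosed
  refine ⟨z, (Set.mem_iInter.mp hz 0).1, ?_⟩
  · by_contra hlt
    push_neg at hlt
    obtain ⟨n, hn⟩ := exists_nat_one_div_lt (sub_pos.mpr hlt)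
    have := (Set.mem_iInter.mp hz n).2
    simp only [Set.mem_preimage, Set.mem_Ici] at this
    linarith

/-- The sendograph of the Zadeh extension is the image of the sendograph
under `f × id`. -/
theorem stmt8 {X : Type*} [TopologicalSpace X] [T2Space X] {f : X → X} (hf : Continuous f)
    {u : X → ℝ} (hu : IsFuzzySet u) :
    send (zadeh f u) = Prod.map f id '' send u := by
  have hbdd : ∀ y, BddAbove (u '' (f ⁻¹' {y})) := by
    rintro y
    exact ⟨1, by rintro _ ⟨z, -, rfl⟩; exact (hu.mem_Icc z).2⟩
  have hKcomp : IsCompact (closure {x | 0 < u x}) := hu.compact_supp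
  -- positive values of the Zadeh extension come from positive values of u
  have hpos : {x | 0 < zadeh f u x} ⊆ f '' {x | 0 < u x} := by
    intro y hy
    have hne : (u '' (f ⁻¹' {y})).Nonempty := by
      by_contra hemp
      rw [Set.not_nonempty_iff_eq_empty] at hemp
      simp only [zadeh, Set.mem_setOf_eq, hemp, Real.sSup_empty, lt_self_iff_false] at hy
    obtain ⟨w, hw, hw0⟩ := exists_lt_of_lt_csSup hne hy
    obtain ⟨z, hz, rfl⟩ := hw
    exact ⟨z, hw0, hz⟩
  have himg : f '' {x | 0 < u x} ⊆ {x | 0 < zadeh f u x} := by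
    rintro _ ⟨z, hz, rfl⟩
    exact lt_of_lt_of_le hz (le_csSup (hbdd _) ⟨z, rfl, rfl⟩)
  have hfK : f '' closure {x | 0 < u x} ⊆ closure {x | 0 < zadeh f u x} :=
    le_trans (image_closure_subset_closure_image hf) (closure_mono himg)
  have hclosK : closure {x | 0 < zadeh f u x} ⊆ f '' closure {x | 0 < u x} := by
    apply closure_minimal
    · exact hpos.trans (Set.image_mono (f := f) subset_closure)
    · exact (hKcomp.image hf).isClosed
  ext ⟨y, α⟩
  simp only [send, fuzzyCut, if_pos rfl, Set.mem_setOf_eq, Set.mem_image, Prod.map, Prod.ext_iff]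
  constructor
  · rintro ⟨hy0, hαI, hαle⟩
    obtain ⟨z₀, hz₀K, rfl⟩ := hclosK hy0
    rcases eq_or_lt_of_le hαI.1 with hα0 | hα0
    · exact ⟨(z₀, α), ⟨hz₀K, hαI, hα0 ▸ (hu.mem_Icc z₀).1⟩, rfl, rfl⟩
    · have hS : IsCompact (f ⁻¹' {f z₀} ∩ closure {x | 0 < u x}) :=
        hKcomp.inter_left ((isClosed_singleton).preimage hf)
      have hhyp : ∀ n : ℕ, ∃ z ∈ f ⁻¹' {f z₀} ∩ closure {x | 0 < u x},
          α - 1/(n+1) ≤ u z := by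
        intro n
        have hδ : (0:ℝ) < min ((1:ℝ)/(n+1)) (α/2) := lt_min (by positivity) (by linarith)
        have hlt : α - min ((1:ℝ)/(n+1)) (α/2) < sSup (u '' (f ⁻¹' {f z₀})) := by
          have : α - min ((1:ℝ)/(n+1)) (α/2) < α := by linarith
          exact lt_of_lt_of_le this hαle
        have hne : (u '' (f ⁻¹' {f z₀})).Nonempty := by
          by_contra hemp
          rw [Set.not_nonempty_iff_eq_empty] at hemp
          rw [hemp, Real.sSup_empty] at hlt
          have := min_le_right (1/(n+1):ℝ) (α/2)
          linarith
        obtain ⟨w, hw, hw0⟩ := exists_lt_of_lt_csSup hne hlt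
        obtain ⟨z, hz, rfl⟩ := hw
        have hupos : 0 < u z := by
          have h1 : α - min ((1:ℝ)/(n+1)) (α/2) ≥ α/2 := by
            have := min_le_right (1/(n+1):ℝ) (α/2); linarith
          linarith
        refine ⟨z, ⟨hz, subset_closure hupos⟩, ?_⟩
        have := min_le_left (1/(n+1):ℝ) (α/2)
        linarith
      obtain ⟨z, hzS, hz⟩ := usc_key hu.usc hS hhyp
      exact ⟨(z, α), ⟨hzS.2, hαI, hz⟩, hzS.1, rfl⟩
  · rintro ⟨⟨z, β⟩, ⟨hzK, hβ, hβle⟩, hfz, hβα⟩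
    subst hfz; subst hβα
    refine ⟨hfK ⟨z, hzK, rfl⟩, hβ, ?_⟩
    exact le_trans hβle (le_csSup (hbdd _) ⟨z, rfl, rfl⟩)
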